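/- The rec-index is self-conjugate: if p is the conjugate partition of the citation vector x (so p has length x₁ and p_i is the number of indices j with x_j ≥ i), then rec(p) = rec(x). -/

import Mathlib

/-- A citation vector: a finite nonincreasing list of positive integers. -/
def CitVec (x : List ℕ) : Prop :=
  (∀ a ∈ x, 0 < a) ∧ List.Pairwise (· ≥ ·) x

/-- The rec-index: max over 1 ≤ i ≤ n of i·x_i (0 for the empty vector). -/
def recIdx (x : List ℕ) : ℕ :=
  ((List.range x.length).map (fun i => (i + 1) * x.getD i 0)).foldr max 0

/-- Domination: u ⊑ x. -/
def Dom (u x : List ℕ) : Prop :=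
  u.length ≤ x.length ∧ ∀ i < u.length, u.getD i 0 ≤ x.getD i 0

/-- Uniform: all entries equal. -/
def Uniform (x : List ℕ) : Prop := ∀ a ∈ x, ∀ b ∈ x, a = b

/-- x^[k]: add one citation to publication k (1-indexed; append a 1 if k = n+1). -/
def incr (x : List ℕ) (k : ℕ) : List ℕ :=
  if k ≤ x.length then x.set (k - 1) (x.getD (k - 1) 0 + 1) else x ++ [1]

/-- k is the smallest index j with x_j = x_k (taking x_{n+1} = 0);
equivalently all earlier entries are strictly larger. -/
def MinIndex (x : List ℕ) (k : ℕ) : Prop :=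
  1 ≤ k ∧ k ≤ x.length + 1 ∧ ∀ j, 1 ≤ j → j < k → x.getD (k - 1) 0 < x.getD (j - 1) 0

/-- The conjugate partition: p has length x₁ and p_i = #{ j : x_j ≥ i }. -/
def conj (x : List ℕ) : List ℕ :=
  (List.range (x.headD 0)).map (fun i => x.countP (fun a => i + 1 ≤ a))




lemma foldr_max_le {l : List ℕ} {m : ℕ} (h : ∀ a ∈ l, a ≤ m) : l.foldr max 0 ≤ m := by
  induction l with
  | nil => simp
  | cons a t ih =>
    simp only [List.foldr_cons, max_le_iff]
    exact ⟨h a (by simp), ih fun b hb => h b (by simp [hb])⟩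

lemma le_foldr_max {l : List ℕ} {a : ℕ} (h : a ∈ l) : a ≤ l.foldr max 0 := by
  induction l with
  | nil => simp at h
  | cons b t ih =>
    simp only [List.foldr_cons]
    rcases List.mem_cons.1 h with rfl | h
    · exact le_max_left _ _
    · exact le_trans (ih h) (le_max_right _ _)

lemma recIdx_le {x : List ℕ} {m : ℕ} (h : ∀ i, i < x.length → (i+1) * x.getD i 0 ≤ m) :
    recIdx x ≤ m := by
  apply foldr_max_le
  intro a ha
  simp only [List.mem_map, List.mem_range] at ha
  obtain ⟨i, hi, rfl⟩ := ha
  exact h i hi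

lemma le_recIdx {x : List ℕ} {i : ℕ} (h : i < x.length) :
    (i+1) * x.getD i 0 ≤ recIdx x := by
  apply le_foldr_max
  simp only [List.mem_map, List.mem_range]
  exact ⟨i, h, rfl⟩

lemma countP_iff {x : List ℕ} (hx : List.Pairwise (· ≥ ·) x) (v : ℕ) :
    ∀ j, j < x.length → (v ≤ x.getD j 0 ↔ j < x.countP (fun a => v ≤ a)) := by
  induction x with
  | nil => simp
  | cons a t ih =>
    intro j hj
    have hat : ∀ b ∈ t, b ≤ a := fun b hb => (List.pairwise_cons.1 hx).1 b hb
    have ht : List.Pairwise (· ≥ ·) t := (List.pairwise_cons.1 hx).2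
    cases j with
    | zero =>
      simp only [List.getD_cons_zero, List.countP_cons]
      constructor
      · intro hva
        simp [decide_eq_true_eq, hva]
      · intro hc
        by_contra hva
        push_neg at hva
        have ht0 : t.countP (fun a => decide (v ≤ a)) = 0 := by
          rw [List.countP_eq_zero]
          intro b hb
          simp only [decide_eq_true_eq, not_le]
          exact lt_of_le_of_lt (hat b hb) hva
        simp [ht0, decide_eq_true_eq, not_le.2 hva] at hc
    | succ j =>
      have hjt : j < t.length := by simpa using hj
      simp only [List.getD_cons_succ, List.countP_cons]
      by_cases hva : v ≤ a
      · simp only [decide_eq_true_eq, hva, if_true]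
        rw [ih ht j hjt]
        omega
      · have ht0 : t.countP (fun a => decide (v ≤ a)) = 0 := by
          rw [List.countP_eq_zero]
          intro b hb
          simp only [decide_eq_true_eq, not_le]
          exact lt_of_le_of_lt (hat b hb) (not_le.1 hva)
        simp only [decide_eq_true_eq, hva, if_false, ht0]
        constructor
        · intro hvt
          exfalso
          have : t.getD j 0 ∈ t := by
            rw [List.getD_eq_getElem _ _ hjt]; exact List.getElem_mem _
          have := lt_of_le_of_lt (hat _ this) (not_le.1 hva)
          omega
        · omega

lemma conj_length (x : List ℕ) : (conj x).length = x.headD 0 := by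
  simp [conj]

lemma conj_getD {x : List ℕ} {i : ℕ} (h : i < x.headD 0) :
    (conj x).getD i 0 = x.countP (fun a => i + 1 ≤ a) := by
  rw [conj, List.getD_eq_getElem _ _ (by simpa using h)]
  simp

theorem rec_self_conjugate (x : List ℕ) (hx : CitVec x) :
    recIdx (conj x) = recIdx x := by
  obtain ⟨hpos, hsort⟩ := hx
  apply le_antisymm
  · -- rec(p) ≤ rec(x)
    apply recIdx_le
    intro i hi
    rw [conj_length] at hi
    rw [conj_getD hi]
    set c := x.countP (fun a => i + 1 ≤ a) with hc
    rcases Nat.eq_zero_or_pos c with h0 | h0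
    · simp [h0]
    · have hcl : c ≤ x.length := List.countP_le_length
      have hc1 : c - 1 < x.length := by omega
      have : i + 1 ≤ x.getD (c-1) 0 := by
        rw [countP_iff hsort (i+1) (c-1) hc1]
        omega
      calc (i+1) * c ≤ x.getD (c-1) 0 * c := Nat.mul_le_mul_right _ this
        _ = ((c-1)+1) * x.getD (c-1) 0 := by rw [Nat.mul_comm]; congr 1; omega
        _ ≤ recIdx x := le_recIdx hc1
  · -- rec(x) ≤ rec(p)
    apply recIdx_le
    intro j hj
    set v := x.getD j 0 with hv
    have hmem : v ∈ x := by
      rw [hv, List.getD_eq_getElem _ _ hj]; exact List.getElem_mem _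
    have hv0 : 0 < v := hpos v hmem
    have hvh : v ≤ x.headD 0 := by
      cases x with
      | nil => simp at hj
      | cons a t =>
        cases j with
        | zero => simp [hv]
        | succ j =>
          have hjt : j < t.length := by simpa using hj
          simp only [List.headD_cons]
          have : t.getD j 0 ∈ t := by
            rw [List.getD_eq_getElem _ _ hjt]; exact List.getElem_mem _
          exact (List.pairwise_cons.1 hsort).1 _ this
    have hv1 : v - 1 < (conj x).length := by rw [conj_length]; omega
    have hpv : j + 1 ≤ (conj x).getD (v-1) 0 := by
      rw [conj_getD (by omega : v - 1 < x.headD 0)]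
      have : (v-1) + 1 = v := by omega
      rw [this]
      have := (countP_iff hsort v j hj).1 (le_refl v)
      omega
    calc (j+1) * v ≤ (conj x).getD (v-1) 0 * v := Nat.mul_le_mul_right _ hpv
      _ = ((v-1)+1) * (conj x).getD (v-1) 0 := by rw [Nat.mul_comm]; congr 1; omega
      _ ≤ recIdx (conj x) := le_recIdx hv1
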